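/- Let H = {H_x}_{x∈X} be a bundle of Hilbert spaces and K an H-operator-valued kernel. Then K is positive semidefinite if and only if there exists a reproducing kernel Hilbert space R of cross-sections f (with f(x) ∈ H_x) such that: (1) K_x h := K(·, x)h ∈ R for all x ∈ X and h ∈ H_x, and (2) ⟨f(x), h⟩_{H_x} = ⟨f, K_x h⟩_R for all f ∈ R, x ∈ X, h ∈ H_x. -/

import Mathlib

/-- A reproducing kernel Hilbert space of cross-sections for an operator valued
kernel `K` over a bundle of Hilbert spaces `H`: a Hilbert space `space` realised
(via the injective linear map `toFun`) as a space of cross-sections `f` with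
`f x ∈ H x`, containing all kernel sections `K_x h = K(·,x)h` and satisfying the
reproducing property. -/
structure BundleRKHS {X : Type} (H : X → Type)
    [∀ x, NormedAddCommGroup (H x)] [∀ x, InnerProductSpace ℝ (H x)]
    [∀ x, CompleteSpace (H x)]
    (K : ∀ y x : X, H x →L[ℝ] H y) where
  space : Type
  [grp : NormedAddCommGroup space]
  [ips : InnerProductSpace ℝ space]
  [cpl : CompleteSpace space]
  toFun : space →ₗ[ℝ] (∀ x, H x)
  inj : Function.Injective toFun
  sec : ∀ x, H x → space
  sec_eval : ∀ (x : X) (h : H x) (y : X), toFun (sec x h) y = K y x h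
  reproducing : ∀ (f : space) (x : X) (h : H x),
    (inner ℝ (toFun f x) h : ℝ) = inner ℝ f (sec x h)

attribute [instance] BundleRKHS.grp BundleRKHS.ips BundleRKHS.cpl

open scoped RealInnerProductSpace Classical
set_option linter.unusedSectionVars false



set_option maxHeartbeats 800000

namespace RKHSaux

variable {X : Type} {H : X → Type} [∀ x, NormedAddCommGroup (H x)]
  [∀ x, InnerProductSpace ℝ (H x)] [∀ x, CompleteSpace (H x)]
  [DecidableEq X]
  (K : ∀ y x : X, H x →L[ℝ] H y)

noncomputable def L : (Π₀ x, H x) →ₗ[ℝ] (∀ x, H x) :=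
  DFinsupp.lsum ℝ fun x => LinearMap.pi fun y => (K y x).toLinearMap

lemma L_single (x : X) (h : H x) (y : X) : L K (DFinsupp.single x h) y = K y x h := by
  simp [L]

lemma L_apply (d : Π₀ x, H x) (y : X) :
    L K d y = ∑ x ∈ d.support, K y x (d x) := by
  rw [L, DFinsupp.lsum_apply_apply, DFinsupp.sumAddHom_apply, DFinsupp.sum, Finset.sum_apply]
  rfl

noncomputable def pairF : (Π₀ x, H x) →ₗ[ℝ] ((∀ x, H x) →ₗ[ℝ] ℝ) :=
  DFinsupp.lsum ℝ fun x =>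
    (LinearMap.lcomp ℝ ℝ (LinearMap.proj x)) ∘ₗ (innerₗ (H x)).flip

lemma pairF_single (x : X) (h : H x) (f : ∀ x, H x) :
    pairF (DFinsupp.single x h) f = ⟪f x, h⟫ := by
  simp [pairF, real_inner_comm]

lemma pairF_apply (e : Π₀ x, H x) (f : ∀ x, H x) :
    pairF e f = ∑ x ∈ e.support, ⟪f x, e x⟫ := by
  rw [pairF, DFinsupp.lsum_apply_apply, DFinsupp.sumAddHom_apply, DFinsupp.sum,
    LinearMap.coe_sum, Finset.sum_apply]
  simp [real_inner_comm]

variable (herm : ∀ x y, K y x = (K x y).adjoint)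

include herm in
lemma pair_comm (d e : Π₀ x, H x) : pairF e (L K d) = pairF d (L K e) := by
  rw [pairF_apply, pairF_apply]
  calc ∑ x ∈ e.support, ⟪L K d x, e x⟫
      = ∑ x ∈ e.support, ∑ y ∈ d.support, ⟪K x y (d y), e x⟫ := by
        refine Finset.sum_congr rfl fun x _ => ?_
        rw [L_apply, sum_inner]
    _ = ∑ y ∈ d.support, ∑ x ∈ e.support, ⟪K x y (d y), e x⟫ := Finset.sum_comm
    _ = ∑ y ∈ d.support, ⟪L K e y, d y⟫ := by
        refine Finset.sum_congr rfl fun y _ => ?_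
        rw [L_apply, sum_inner]
        refine Finset.sum_congr rfl fun x _ => ?_
        rw [herm y x, ContinuousLinearMap.adjoint_inner_left, real_inner_comm]

lemma sum_over_support (s : Finset X) (G : X → ℝ) :
    ∑ i : Fin s.card, G ((s.equivFin.symm i : s) : X) = ∑ x ∈ s, G x := by
  rw [← Finset.sum_coe_sort s G]
  exact (Fintype.sum_equiv s.equivFin (fun a => G (a : X))
    (fun i => G ((s.equivFin.symm i : s) : X)) (fun a => by simp)).symm

lemma pair_self_nonneg
    (hp : ∀ (n : ℕ) (xs : Fin n → X) (h : ∀ i, H (xs i)),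
        0 ≤ ∑ i, ∑ j, (inner ℝ (K (xs j) (xs i) (h i)) (h j) : ℝ))
    (d : Π₀ x, H x) : 0 ≤ pairF d (L K d) := by
  set s := d.support with hs
  have key := hp s.card (fun i => ((s.equivFin.symm i : s) : X))
    (fun i => d ((s.equivFin.symm i : s) : X))
  rw [pairF_apply]
  have step : ∀ x : X, ⟪L K d x, d x⟫ = ∑ y ∈ s, ⟪K x y (d y), d x⟫ := fun x => by
    rw [L_apply, sum_inner]
  calc (0:ℝ) ≤ ∑ i, ∑ j, ⟪K ((s.equivFin.symm j : s) : X) ((s.equivFin.symm i : s) : X)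
        (d ((s.equivFin.symm i : s) : X)), d ((s.equivFin.symm j : s) : X)⟫ := key
    _ = ∑ i : Fin s.card, ∑ x ∈ s, ⟪K x ((s.equivFin.symm i : s) : X)
        (d ((s.equivFin.symm i : s) : X)), d x⟫ := by
        refine Finset.sum_congr rfl fun i _ => ?_
        exact sum_over_support s (fun x => ⟪K x _ (d _), d x⟫)
    _ = ∑ x ∈ s, ∑ i : Fin s.card, ⟪K x ((s.equivFin.symm i : s) : X)
        (d ((s.equivFin.symm i : s) : X)), d x⟫ := Finset.sum_comm
    _ = ∑ x ∈ s, ∑ y ∈ s, ⟪K x y (d y), d x⟫ := by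
        refine Finset.sum_congr rfl fun x _ => ?_
        exact sum_over_support s (fun y => ⟪K x y (d y), d x⟫)
    _ = ∑ x ∈ s, ⟪L K d x, d x⟫ := by
        refine Finset.sum_congr rfl fun x _ => (step x).symm

end RKHSaux

namespace RKHSaux
variable {X : Type} {H : X → Type} [∀ x, NormedAddCommGroup (H x)]
  [∀ x, InnerProductSpace ℝ (H x)] [∀ x, CompleteSpace (H x)]
  [DecidableEq X]
  (K : ∀ y x : X, H x →L[ℝ] H y)
  (herm : ∀ x y, K y x = (K x y).adjoint)

noncomputable def B1 : ((Π₀ x, H x) ⧸ LinearMap.ker (L K)) →ₗ[ℝ] (Π₀ x, H x) →ₗ[ℝ] ℝ :=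
  Submodule.liftQ _ ((pairF (H:=H)).flip ∘ₗ L K) (by
    intro d hd
    rw [LinearMap.mem_ker] at hd ⊢
    ext e
    simp [hd])

lemma B1_mk (d e : Π₀ x, H x) :
    B1 K (Submodule.Quotient.mk d) e = pairF e (L K d) := rfl

include herm in
lemma flipB1_ker {e : Π₀ x, H x} (he : e ∈ LinearMap.ker (L K)) : (B1 K).flip e = 0 := by
  refine LinearMap.ext fun q => ?_
  obtain ⟨d, rfl⟩ := Submodule.Quotient.mk_surjective (LinearMap.ker (L K)) q
  show B1 K (Submodule.Quotient.mk d) e = 0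
  rw [B1_mk, pair_comm K herm d e, LinearMap.mem_ker.mp he, map_zero]

noncomputable def B2 : ((Π₀ x, H x) ⧸ LinearMap.ker (L K)) →ₗ[ℝ]
    ((Π₀ x, H x) ⧸ LinearMap.ker (L K)) →ₗ[ℝ] ℝ :=
  Submodule.liftQ _ (B1 K).flip (fun e he => flipB1_ker K herm he)

lemma B2_mk (d e : Π₀ x, H x) :
    B2 K herm (Submodule.Quotient.mk e) (Submodule.Quotient.mk d) = pairF e (L K d) := rfl

end RKHSaux

namespace RKHSaux
variable {X : Type} {H : X → Type} [∀ x, NormedAddCommGroup (H x)]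
  [∀ x, InnerProductSpace ℝ (H x)] [∀ x, CompleteSpace (H x)]
  [DecidableEq X]
  (K : ∀ y x : X, H x →L[ℝ] H y)
  (herm : ∀ x y, K y x = (K x y).adjoint)

noncomputable def preQ
    (hp : ∀ (n : ℕ) (xs : Fin n → X) (h : ∀ i, H (xs i)),
        0 ≤ ∑ i, ∑ j, (inner ℝ (K (xs j) (xs i) (h i)) (h j) : ℝ)) :
    PreInnerProductSpace.Core ℝ ((Π₀ x, H x) ⧸ LinearMap.ker (L K)) where
  inner p q := B2 K herm p q
  conj_inner_symm p q := by
    obtain ⟨d, rfl⟩ := Submodule.Quotient.mk_surjective (LinearMap.ker (L K)) p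
    obtain ⟨e, rfl⟩ := Submodule.Quotient.mk_surjective (LinearMap.ker (L K)) q
    show (starRingEnd ℝ) (B2 K herm _ _) = B2 K herm _ _
    rw [starRingEnd_apply, star_trivial, B2_mk, B2_mk, pair_comm K herm]
  re_inner_nonneg p := by
    obtain ⟨d, rfl⟩ := Submodule.Quotient.mk_surjective (LinearMap.ker (L K)) p
    show (0:ℝ) ≤ RCLike.re (B2 K herm _ _)
    rw [RCLike.re_to_real, B2_mk]
    exact pair_self_nonneg K hp d
  add_left p q r := by
    show B2 K herm (p + q) r = B2 K herm p r + B2 K herm q r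
    rw [map_add, LinearMap.add_apply]
  smul_left p q r := by
    show B2 K herm (r • p) q = (starRingEnd ℝ) r * B2 K herm p q
    rw [map_smul, LinearMap.smul_apply, starRingEnd_apply, star_trivial, smul_eq_mul]

noncomputable def coreQ
    (hp : ∀ (n : ℕ) (xs : Fin n → X) (h : ∀ i, H (xs i)),
        0 ≤ ∑ i, ∑ j, (inner ℝ (K (xs j) (xs i) (h i)) (h j) : ℝ)) :
    InnerProductSpace.Core ℝ ((Π₀ x, H x) ⧸ LinearMap.ker (L K)) where
  toCore := preQ K herm hp
  definite p hzero := by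
    letI := preQ K herm hp
    obtain ⟨d, rfl⟩ := Submodule.Quotient.mk_surjective (LinearMap.ker (L K)) p
    rw [Submodule.Quotient.mk_eq_zero]
    rw [LinearMap.mem_ker]
    funext x
    set h := L K d x with hh
    show L K d x = (0 : H x)
    -- Cauchy-Schwarz
    have cs := InnerProductSpace.Core.inner_mul_inner_self_le (𝕜 := ℝ)
      (F := (Π₀ x, H x) ⧸ LinearMap.ker (L K))
      (Submodule.Quotient.mk (DFinsupp.single x h)) (Submodule.Quotient.mk d)
    have key : ‖pairF (DFinsupp.single x h) (L K d)‖ * ‖pairF d (L K (DFinsupp.single x h))‖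
        ≤ pairF (DFinsupp.single x h) (L K (DFinsupp.single x h)) * pairF d (L K d) := cs
    have h0 : pairF d (L K d) = 0 := hzero
    have h2 : pairF (DFinsupp.single x h) (L K d) = ⟪h, h⟫ := by
      rw [pairF_single, hh]
    have h3 : pairF d (L K (DFinsupp.single x h)) = ⟪h, h⟫ := by
      rw [pair_comm K herm (DFinsupp.single x h) d, pairF_single, hh]
    rw [h0, mul_zero, h2, h3] at key
    have hnn : (0:ℝ) ≤ ‖(⟪h, h⟫ : ℝ)‖ := norm_nonneg _
    have hz : (⟪h, h⟫ : ℝ) = 0 := by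
      rw [← norm_eq_zero]; nlinarith
    exact inner_self_eq_zero.mp hz

end RKHSaux

namespace RKHSaux
variable {X : Type} {H : X → Type} [∀ x, NormedAddCommGroup (H x)]
  [∀ x, InnerProductSpace ℝ (H x)] [∀ x, CompleteSpace (H x)]
  [DecidableEq X]
  (K : ∀ y x : X, H x →L[ℝ] H y)
  (herm : ∀ x y, K y x = (K x y).adjoint)

noncomputable def theRKHS
    (hp : ∀ (n : ℕ) (xs : Fin n → X) (h : ∀ i, H (xs i)),
        0 ≤ ∑ i, ∑ j, (inner ℝ (K (xs j) (xs i) (h i)) (h j) : ℝ)) :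
    BundleRKHS H K :=
  letI cd : InnerProductSpace.Core ℝ ((Π₀ x, H x) ⧸ LinearMap.ker (L K)) := coreQ K herm hp
  letI : NormedAddCommGroup ((Π₀ x, H x) ⧸ LinearMap.ker (L K)) :=
    InnerProductSpace.Core.toNormedAddCommGroup (𝕜 := ℝ)
  letI : InnerProductSpace ℝ ((Π₀ x, H x) ⧸ LinearMap.ker (L K)) := InnerProductSpace.ofCore cd.toCore
  let secQ : ∀ x, H x →ₗ[ℝ] ((Π₀ x, H x) ⧸ LinearMap.ker (L K)) := fun x =>
    (LinearMap.ker (L K)).mkQ ∘ₗ DFinsupp.lsingle x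
  have inner_mk : ∀ e d : Π₀ x, H x,
      (inner ℝ (Submodule.Quotient.mk e : (Π₀ x, H x) ⧸ LinearMap.ker (L K))
        (Submodule.Quotient.mk d) : ℝ) = pairF e (L K d) := fun e d => rfl
  have bound : ∀ x (h : H x), ‖secQ x h‖ ≤ Real.sqrt ‖K x x‖ * ‖h‖ := by
    intro x h
    have e1 : (inner ℝ (secQ x h) (secQ x h) : ℝ) = ⟪K x x h, h⟫ := by
      have := inner_mk (DFinsupp.single x h) (DFinsupp.single x h)
      refine this.trans ?_
      rw [pairF_single, L_single]
    have e2 : ‖secQ x h‖ = Real.sqrt (inner ℝ (secQ x h) (secQ x h) : ℝ) :=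
      norm_eq_sqrt_real_inner _
    rw [e2, e1]
    have h1 := real_inner_le_norm (K x x h) h
    have h2 := (K x x).le_opNorm h
    calc Real.sqrt ⟪K x x h, h⟫ ≤ Real.sqrt (‖K x x‖ * ‖h‖ * ‖h‖) := by
          apply Real.sqrt_le_sqrt
          nlinarith [norm_nonneg h, norm_nonneg (K x x h)]
      _ = Real.sqrt ‖K x x‖ * ‖h‖ := by
          rw [mul_assoc, Real.sqrt_mul (norm_nonneg _), Real.sqrt_mul_self (norm_nonneg _)]
  let secC : ∀ x, H x →L[ℝ] UniformSpace.Completion ((Π₀ x, H x) ⧸ LinearMap.ker (L K)) :=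
    fun x => (UniformSpace.Completion.toComplL) ∘L
      (LinearMap.mkContinuous (secQ x) (Real.sqrt ‖K x x‖) (bound x))
  { space := UniformSpace.Completion ((Π₀ x, H x) ⧸ LinearMap.ker (L K))
    grp := inferInstance
    ips := inferInstance
    cpl := inferInstance
    toFun := LinearMap.pi fun x => (ContinuousLinearMap.adjoint (secC x)).toLinearMap
    sec := fun x h => secC x h
    sec_eval := by
      intro x h y
      show ContinuousLinearMap.adjoint (secC y) (secC x h) = K y x h
      apply ext_inner_right ℝ
      intro k
      rw [ContinuousLinearMap.adjoint_inner_left]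
      have hx : secC x h =
          ((Submodule.Quotient.mk (DFinsupp.single x h) : (Π₀ x, H x) ⧸ LinearMap.ker (L K)) :
            UniformSpace.Completion ((Π₀ x, H x) ⧸ LinearMap.ker (L K))) := rfl
      have hy : secC y k =
          ((Submodule.Quotient.mk (DFinsupp.single y k) : (Π₀ x, H x) ⧸ LinearMap.ker (L K)) :
            UniformSpace.Completion ((Π₀ x, H x) ⧸ LinearMap.ker (L K))) := rfl
      rw [hx, hy, UniformSpace.Completion.inner_coe, inner_mk, pairF_single, L_single,
        herm y x, ContinuousLinearMap.adjoint_inner_left, real_inner_comm]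
    reproducing := by
      intro f x h
      show (inner ℝ (ContinuousLinearMap.adjoint (secC x) f) h : ℝ) = inner ℝ f (secC x h)
      exact ContinuousLinearMap.adjoint_inner_left (secC x) h f
    inj := by
      intro f g hfg
      have hcomp : ∀ x : X, ContinuousLinearMap.adjoint (secC x) f
          = ContinuousLinearMap.adjoint (secC x) g := fun x => congrFun hfg x
      have hQ : ∀ q : (Π₀ x, H x) ⧸ LinearMap.ker (L K),
          (inner ℝ f ((q : UniformSpace.Completion ((Π₀ x, H x) ⧸ LinearMap.ker (L K)))) : ℝ)
          = inner ℝ g (q : UniformSpace.Completion ((Π₀ x, H x) ⧸ LinearMap.ker (L K))) := by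
        intro q
        obtain ⟨d, rfl⟩ := Submodule.Quotient.mk_surjective (LinearMap.ker (L K)) q
        induction d using DFinsupp.induction with
        | h0 => simp [UniformSpace.Completion.coe_zero]
        | ha x h rest hrx hne ih =>
          rw [Submodule.Quotient.mk_add, UniformSpace.Completion.coe_add, inner_add_right,
            inner_add_right, ih]
          congr 1
          have h1 : ((Submodule.Quotient.mk (DFinsupp.single x h) :
              (Π₀ x, H x) ⧸ LinearMap.ker (L K)) :
              UniformSpace.Completion ((Π₀ x, H x) ⧸ LinearMap.ker (L K))) = secC x h := rfl
          rw [h1, ← ContinuousLinearMap.adjoint_inner_left (secC x),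
            ← ContinuousLinearMap.adjoint_inner_left (secC x), hcomp x]
      have hfun : (fun v : UniformSpace.Completion ((Π₀ x, H x) ⧸ LinearMap.ker (L K)) =>
          (inner ℝ f v : ℝ)) = fun v => (inner ℝ g v : ℝ) := by
        apply Continuous.ext_on UniformSpace.Completion.denseRange_coe
        · exact continuous_const.inner continuous_id
        · exact continuous_const.inner continuous_id
        · rintro v ⟨q, rfl⟩
          exact hQ q
      exact ext_inner_right ℝ fun v => congrFun hfun v }

end RKHSaux

/-- An operator valued kernel is positive semidefinite if and only if it is the
reproducing kernel of a reproducing kernel Hilbert space of cross-sections. -/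
theorem posSemidef_iff_rkhs {X : Type} (H : X → Type)
    [∀ x, NormedAddCommGroup (H x)] [∀ x, InnerProductSpace ℝ (H x)]
    [∀ x, CompleteSpace (H x)]
    (K : ∀ y x : X, H x →L[ℝ] H y)
    (herm : ∀ x y, K y x = (K x y).adjoint) :
    (∀ (n : ℕ) (xs : Fin n → X) (h : ∀ i, H (xs i)),
        0 ≤ ∑ i, ∑ j, (inner ℝ (K (xs j) (xs i) (h i)) (h j) : ℝ)) ↔
      Nonempty (BundleRKHS H K) := by
  constructor
  · intro hp
    letI := Classical.decEq X
    exact ⟨RKHSaux.theRKHS K herm hp⟩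
  · rintro ⟨R⟩ n xs h
    have e1 : ∀ i j, (inner ℝ (K (xs j) (xs i) (h i)) (h j) : ℝ)
        = inner ℝ (R.sec (xs i) (h i)) (R.sec (xs j) (h j)) := by
      intro i j
      rw [← R.sec_eval (xs i) (h i) (xs j), R.reproducing]
    have e2 : ∑ i, ∑ j, (inner ℝ (K (xs j) (xs i) (h i)) (h j) : ℝ)
        = inner ℝ (∑ i, R.sec (xs i) (h i)) (∑ j, R.sec (xs j) (h j)) := by
      rw [sum_inner]
      refine Finset.sum_congr rfl fun i _ => ?_
      rw [inner_sum]
      exact Finset.sum_congr rfl fun j _ => e1 i j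
    rw [e2]
    exact real_inner_self_nonneg
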